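/- For n ≥ 3, given a braided vector space (R,V), define ρ(σ_i) = I^{⊗(i-1)} ⊗ R ⊗ I^{⊗(n-i-1)} on V^{⊗n} for 1 ≤ i ≤ n−1, ρ(τ) = X the cyclic permutation operator sending v_1⊗⋯⊗v_n to v_n⊗v_1⊗⋯⊗v_{n-1}, and ρ(σ_n) = ρ(τ)ρ(σ_{n-1})ρ(τ)^{-1}. Then these operators satisfy all defining relations of NB_n, so ρ is a representation of NB_n on V^{⊗n}. -/

import Mathlib

open Matrix

open Fin.NatCast in
/-- The operator `I^{⊗i} ⊗ r ⊗ I^{⊗(n-j-1)}` on `V^{⊗n}` (in matrix form with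
respect to a basis `B` of `V`): it acts by `r` on the tensor factors in
positions `i` and `j` (0-based, taken mod `n`) and by the identity elsewhere. -/
def embM {K : Type*} [Field K] {B : Type*} [Fintype B] [DecidableEq B]
    (n : ℕ) [NeZero n] (r : Matrix (B × B) (B × B) K) (i j : ℕ) :
    Matrix (Fin n → B) (Fin n → B) K :=
  Matrix.of fun x y =>
    if ∀ k : Fin n, k ≠ (i : Fin n) → k ≠ (j : Fin n) → x k = y k then
      r (x (i : Fin n), x (j : Fin n)) (y (i : Fin n), y (j : Fin n))
    else 0

/-- The cyclic permutation operator on `V^{⊗n}` sending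
`v_1 ⊗ ⋯ ⊗ v_n` to `v_n ⊗ v_1 ⊗ ⋯ ⊗ v_{n-1}` (matrix form). -/
def cycM (K : Type*) [Field K] (B : Type*) [Fintype B] [DecidableEq B]
    (n : ℕ) [NeZero n] : Matrix (Fin n → B) (Fin n → B) K :=
  Matrix.of fun x y => if ∀ k : Fin n, x k = y (k - 1) then 1 else 0

section Aux

open Fin.NatCast

variable {K : Type*} [Field K] {B : Type*} [Fintype B] [DecidableEq B]

/-- `embM` with `Fin` indices. -/
def embF (n : ℕ) [NeZero n] (r : Matrix (B × B) (B × B) K) (i j : Fin n) :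
    Matrix (Fin n → B) (Fin n → B) K :=
  Matrix.of fun x y =>
    if ∀ k : Fin n, k ≠ i → k ≠ j → x k = y k then
      r (x i, x j) (y i, y j)
    else 0

lemma embM_eq (n : ℕ) [NeZero n] (r : Matrix (B × B) (B × B) K) (a b : ℕ) :
    embM n r a b = embF n r (a : Fin n) (b : Fin n) := rfl

variable {n : ℕ} [NeZero n]

lemma cyc_mul_apply (M : Matrix (Fin n → B) (Fin n → B) K) (x y : Fin n → B) :
    (cycM K B n * M) x y = M (fun m => x (m + 1)) y := by
  rw [Matrix.mul_apply]
  rw [Fintype.sum_eq_single (fun m => x (m + 1) : Fin n → B)]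
  · have h : (cycM K B n) x (fun m => x (m + 1)) = 1 := by
      rw [cycM]
      simp only [Matrix.of_apply]
      rw [if_pos]
      intro k
      simp
    rw [h, one_mul]
  · intro z hz
    by_cases h : ∀ k : Fin n, x k = z (k - 1)
    · exfalso
      apply hz
      funext m
      have := h (m + 1)
      simpa using this.symm
    · simp [cycM, h]

lemma mul_cyc_apply (M : Matrix (Fin n → B) (Fin n → B) K) (x y : Fin n → B) :
    (M * cycM K B n) x y = M x (fun m => y (m - 1)) := by
  rw [Matrix.mul_apply]
  rw [Fintype.sum_eq_single (fun m => y (m - 1) : Fin n → B)]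
  · simp [cycM]
  · intro z hz
    by_cases h : ∀ k : Fin n, z k = y (k - 1)
    · exact absurd (funext h) hz
    · simp [cycM, h]

lemma cyc_pow (k : ℕ) :
    (cycM K B n) ^ k = Matrix.of fun x y =>
      if ∀ m : Fin n, x m = y (m - (k : Fin n)) then 1 else 0 := by
  induction k with
  | zero =>
    ext x y
    simp only [pow_zero, Matrix.one_apply, Matrix.of_apply, Nat.cast_zero, sub_zero]
    exact if_congr funext_iff rfl rfl
  | succ k ih =>
    ext x y
    rw [pow_succ, mul_cyc_apply, ih]
    have hcast : ((k + 1 : ℕ) : Fin n) = (k : Fin n) + 1 := by push_cast; ring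
    simp only [Matrix.of_apply, hcast]
    exact if_congr (by constructor <;> intro h m <;> simpa [sub_sub] using h m) rfl rfl

lemma cyc_pow_n : (cycM K B n) ^ n = 1 := by
  rw [cyc_pow]
  ext x y
  simp [Matrix.one_apply, funext_iff, Fin.natCast_self]

lemma cyc_inv_mul : (cycM K B n)⁻¹ * cycM K B n = 1 := by
  have hn : 0 < n := Nat.pos_of_ne_zero (NeZero.ne n)
  have h1 : (cycM K B n) ^ (n - 1) * cycM K B n = 1 := by
    rw [← pow_succ, Nat.sub_add_cancel hn, cyc_pow_n]
  rw [Matrix.inv_eq_left_inv h1]; exact h1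

lemma cyc_mul_inv : cycM K B n * (cycM K B n)⁻¹ = 1 := by
  have hn : 0 < n := Nat.pos_of_ne_zero (NeZero.ne n)
  have h1 : (cycM K B n) ^ (n - 1) * cycM K B n = 1 := by
    rw [← pow_succ, Nat.sub_add_cancel hn, cyc_pow_n]
  rw [Matrix.inv_eq_left_inv h1, ← pow_succ', Nat.sub_add_cancel hn, cyc_pow_n]


lemma cyc_conj (r : Matrix (B × B) (B × B) K) (i j : Fin n) :
    cycM K B n * embF n r i j = embF n r (i + 1) (j + 1) * cycM K B n := by
  ext x y
  rw [cyc_mul_apply, mul_cyc_apply]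
  simp only [embF, Matrix.of_apply, add_sub_cancel_right]
  refine if_congr ?_ rfl rfl
  constructor
  · intro h k hk1 hk2
    have hk1' : k - 1 ≠ i := fun hc => hk1 (by rw [← hc, sub_add_cancel])
    have hk2' : k - 1 ≠ j := fun hc => hk2 (by rw [← hc, sub_add_cancel])
    have := h (k - 1) hk1' hk2'
    rwa [sub_add_cancel] at this
  · intro h k hk1 hk2
    have hk1' : k + 1 ≠ i + 1 := fun hc => hk1 (add_right_cancel hc)
    have hk2' : k + 1 ≠ j + 1 := fun hc => hk2 (add_right_cancel hc)
    have := h (k + 1) hk1' hk2'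
    rwa [add_sub_cancel_right] at this

lemma cyc_conj' (r : Matrix (B × B) (B × B) K) (i j : Fin n) :
    cycM K B n * embF n r i j * (cycM K B n)⁻¹ = embF n r (i + 1) (j + 1) := by
  rw [cyc_conj, mul_assoc, cyc_mul_inv, mul_one]

lemma embF_mul_embF (r : Matrix (B × B) (B × B) K) (i j k l : Fin n)
    (hik : i ≠ k) (hil : i ≠ l) (hjk : j ≠ k) (hjl : j ≠ l) :
    embF n r i j * embF n r k l = Matrix.of fun x y =>
      if ∀ m, m ≠ i → m ≠ j → m ≠ k → m ≠ l → x m = y m then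
        r (x i, x j) (y i, y j) * r (x k, x l) (y k, y l)
      else 0 := by
  ext x y
  rw [Matrix.mul_apply]
  simp only [Matrix.of_apply]
  by_cases hD : ∀ m, m ≠ i → m ≠ j → m ≠ k → m ≠ l → x m = y m
  · rw [if_pos hD]
    set z₀ : Fin n → B := fun m => if m = k then x k else if m = l then x l else y m with hz
    have hz0k : z₀ k = x k := by simp [hz]
    have hz0l : z₀ l = x l := by by_cases h : l = k <;> simp [hz, h]
    have hz0 : ∀ m, m ≠ k → m ≠ l → z₀ m = y m := by
      intro m h1 h2; simp [hz, h1, h2]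
    have hP : ∀ m, m ≠ i → m ≠ j → x m = z₀ m := by
      intro m h1 h2
      by_cases hk : m = k
      · rw [hk, hz0k]
      · by_cases hl : m = l
        · rw [hl, hz0l]
        · rw [hz0 m hk hl]; exact hD m h1 h2 hk hl
    have hQ : ∀ m, m ≠ k → m ≠ l → z₀ m = y m := hz0
    rw [Fintype.sum_eq_single z₀]
    · simp only [embF, Matrix.of_apply, if_pos hP, if_pos hQ, hz0k, hz0l,
        hz0 i hik hil, hz0 j hjk hjl]
    · intro z hzne
      by_cases h1 : ∀ m, m ≠ i → m ≠ j → x m = z m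
      · by_cases h2 : ∀ m, m ≠ k → m ≠ l → z m = y m
        · exfalso
          apply hzne
          funext m
          by_cases hk : m = k
          · rw [hk, hz0k, ← (h1 k hik.symm hjk.symm)]
          · by_cases hl : m = l
            · rw [hl, hz0l, ← (h1 l hil.symm hjl.symm)]
            · rw [hz0 m hk hl, h2 m hk hl]
        · simp [embF, h2]
      · simp [embF, h1]
  · rw [if_neg hD]
    push_neg at hD
    obtain ⟨m₀, h1, h2, h3, h4, h5⟩ := hD
    apply Finset.sum_eq_zero
    intro z _
    by_cases hp : ∀ m, m ≠ i → m ≠ j → x m = z m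
    · by_cases hq : ∀ m, m ≠ k → m ≠ l → z m = y m
      · exact absurd ((hp m₀ h1 h2).trans (hq m₀ h3 h4)) h5
      · simp [embF, hq]
    · simp [embF, hp]

lemma embF_comm (r : Matrix (B × B) (B × B) K) (i j k l : Fin n)
    (hik : i ≠ k) (hil : i ≠ l) (hjk : j ≠ k) (hjl : j ≠ l) :
    embF n r i j * embF n r k l = embF n r k l * embF n r i j := by
  rw [embF_mul_embF r i j k l hik hil hjk hjl,
      embF_mul_embF r k l i j hik.symm hjk.symm hil.symm hjl.symm]
  ext x y
  simp only [Matrix.of_apply]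
  exact if_congr ⟨fun h m a b c d => h m c d a b, fun h m a b c d => h m c d a b⟩
    (mul_comm _ _) rfl


section Phi

variable (e : Fin 3 → Fin n)

/-- Splitting `Fin n → B` along the three positions `e 0, e 1, e 2`. -/
noncomputable def splitEquiv (he : Function.Injective e) : (Fin n → B) ≃ ((Fin 3 → B) × ({k : Fin n // ∀ m, e m ≠ k} → B)) where
  toFun x := (fun m => x (e m), fun k => x k.1)
  invFun p k := if h : ∃ m, e m = k then p.1 h.choose else p.2 ⟨k, fun m hm => h ⟨m, hm⟩⟩
  left_inv x := by
    funext k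
    by_cases h : ∃ m, e m = k
    · simp only [dif_pos h]
      rw [h.choose_spec]
    · simp only [dif_neg h]
  right_inv p := by
    ext m
    · have h : ∃ m', e m' = e m := ⟨m, rfl⟩
      simp only [dif_pos h]
      exact congrArg p.1 (he h.choose_spec)
    · have h : ¬ ∃ m', e m' = m.1 := fun ⟨m', hm'⟩ => m.2 m' hm'
      simp only [dif_neg h]

variable (he : Function.Injective e)

/-- Tensoring a matrix on the three positions with the identity elsewhere. -/
noncomputable def PhiM (M : Matrix (Fin 3 → B) (Fin 3 → B) K) :
    Matrix (Fin n → B) (Fin n → B) K :=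
  Matrix.reindex (splitEquiv (B := B) e he).symm (splitEquiv (B := B) e he).symm
    (Matrix.kroneckerMap (· * ·) M
      (1 : Matrix ({k : Fin n // ∀ m, e m ≠ k} → B) ({k : Fin n // ∀ m, e m ≠ k} → B) K))

lemma PhiM_mul (M N : Matrix (Fin 3 → B) (Fin 3 → B) K) :
    PhiM e he M * PhiM e he N = PhiM e he (M * N) := by
  unfold PhiM
  simp only [Matrix.reindex_apply, Equiv.symm_symm]
  rw [Matrix.submatrix_mul_equiv, ← Matrix.mul_kronecker_mul, one_mul]

lemma PhiM_emb (r : Matrix (B × B) (B × B) K) (p q : Fin 3) :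
    PhiM e he (embF 3 r p q) = embF n r (e p) (e q) := by
  ext x y
  simp only [PhiM, Matrix.reindex_apply, Equiv.symm_symm, Matrix.submatrix_apply,
    Matrix.kroneckerMap_apply, splitEquiv, Equiv.coe_fn_mk, embF, Matrix.of_apply]
  by_cases hC : ∀ k : Fin n, k ≠ e p → k ≠ e q → x k = y k
  · have hfun : (fun k : {k : Fin n // ∀ m, e m ≠ k} => x k.1) = (fun k => y k.1) := by
      funext k
      exact hC k.1 (Ne.symm (k.2 p)) (Ne.symm (k.2 q))
    have hc3 : ∀ m : Fin 3, m ≠ p → m ≠ q → x (e m) = y (e m) := fun m hmp hmq =>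
      hC (e m) (fun h => hmp (he h)) (fun h => hmq (he h))
    rw [if_pos hC, if_pos hc3, hfun, Matrix.one_apply_eq, mul_one]
  · rw [if_neg hC]
    push_neg at hC
    obtain ⟨k₀, h1, h2, h3⟩ := hC
    by_cases hk : ∃ m, e m = k₀
    · obtain ⟨m, hm⟩ := hk
      rw [if_neg, zero_mul]
      intro hall
      apply h3
      have := hall m (fun hmp => h1 (by rw [← hm, hmp])) (fun hmq => h2 (by rw [← hm, hmq]))
      rwa [hm] at this
    · have : ((fun k : {k : Fin n // ∀ m, e m ≠ k} => x k.1) : _ → B) ≠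
          (fun k => y k.1) := by
        intro hEq
        exact h3 (congrFun hEq ⟨k₀, fun m hm => hk ⟨m, hm⟩⟩)
      rw [Matrix.one_apply_ne this, mul_zero]

end Phi

lemma braid3 (r : Matrix (B × B) (B × B) K)
    (hyb : embM 3 r 0 1 * embM 3 r 1 2 * embM 3 r 0 1 =
           embM 3 r 1 2 * embM 3 r 0 1 * embM 3 r 1 2)
    (a b c : Fin n) (hab : a ≠ b) (hac : a ≠ c) (hbc : b ≠ c) :
    embF n r a b * embF n r b c * embF n r a b =
      embF n r b c * embF n r a b * embF n r b c := by
  have h01 : embM 3 r 0 1 = embF 3 r 0 1 := by rw [embM_eq]; norm_num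
  have h12 : embM 3 r 1 2 = embF 3 r 1 2 := by rw [embM_eq]; norm_num
  rw [h01, h12] at hyb
  have he : Function.Injective (![a, b, c] : Fin 3 → Fin n) := by
    intro u v h
    fin_cases u <;> fin_cases v <;> simp_all
  have E01 : PhiM ![a, b, c] he (embF 3 r 0 1) = embF n r a b := PhiM_emb _ he r 0 1
  have E12 : PhiM ![a, b, c] he (embF 3 r 1 2) = embF n r b c := PhiM_emb _ he r 1 2
  rw [← E01, ← E12, PhiM_mul, PhiM_mul, PhiM_mul, PhiM_mul, hyb]

end Aux

/-- For `n ≥ 3` and a braided vector space `(R, V)` (i.e. an invertible `r`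
satisfying the Yang–Baxter equation on `V^{⊗3}`), the operators
`ρ(σ_i) = I^{⊗(i-1)} ⊗ R ⊗ I^{⊗(n-i-1)}` for `1 ≤ i ≤ n-1`, `ρ(τ) = X` the
cyclic shift, and `ρ(σ_n) = ρ(τ)ρ(σ_{n-1})ρ(τ)⁻¹` satisfy all defining
relations (B1), (B2), (N1), (N2) of `NB_n`. Here `s i` encodes `ρ(σ_{i+1})`
for `i : Fin n`. -/
theorem necklace_rep_from_BVS {K : Type*} [Field K] {B : Type*} [Fintype B]
    [DecidableEq B] (n : ℕ) (hn : 3 ≤ n) [NeZero n]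
    (r : Matrix (B × B) (B × B) K) (hr : IsUnit r)
    (hyb : embM 3 r 0 1 * embM 3 r 1 2 * embM 3 r 0 1 =
           embM 3 r 1 2 * embM 3 r 0 1 * embM 3 r 1 2) :
    let X := cycM K B n
    let s : Fin n → Matrix (Fin n → B) (Fin n → B) K := fun i =>
      if (i : ℕ) + 1 = n then X * embM n r (n - 2) (n - 1) * X⁻¹
      else embM n r (i : ℕ) ((i : ℕ) + 1)
    (∀ i : Fin n, s i * s (i + 1) * s i = s (i + 1) * s i * s (i + 1)) ∧
    (∀ i j : Fin n, i - j ≠ 1 → j - i ≠ 1 → s i * s j = s j * s i) ∧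
    (∀ i : Fin n, X * s i = s (i + 1) * X) ∧
    X ^ (2 * n) = 1 := by
  intro X s
  open Fin.NatCast in
  have hcast0 : ∀ m : ℕ, 0 < m → m < n → ((m : ℕ) : Fin n) ≠ 0 := by
    intro m h0 hm h
    have := congrArg Fin.val h
    rw [Fin.val_cast_of_lt hm, Fin.val_zero] at this
    omega
  have h10 : (1 : Fin n) ≠ 0 := by
    have := hcast0 1 (by omega) (by omega)
    rwa [Nat.cast_one] at this
  have h20 : (2 : Fin n) ≠ 0 := by
    have := hcast0 2 (by omega) (by omega)
    rwa [Nat.cast_two] at this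
  have hne1 : ∀ i : Fin n, i ≠ i + 1 := fun i h => h10 (left_eq_add.mp h)
  have hne2 : ∀ i : Fin n, i ≠ i + 1 + 1 := by
    intro i h
    rw [add_assoc, one_add_one_eq_two] at h
    exact h20 (left_eq_add.mp h)
  have hs : ∀ i : Fin n, s i = embF n r i (i + 1) := by
    intro i
    simp only [s]
    by_cases hi : (i : ℕ) + 1 = n
    · rw [if_pos hi, embM_eq]
      have hi' : i = ((n - 1 : ℕ) : Fin n) := by
        refine Fin.ext ?_
        rw [Fin.val_cast_of_lt (by omega)]
        omega
      have hc1 : ((n - 2 : ℕ) : Fin n) + 1 = ((n - 1 : ℕ) : Fin n) := by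
        have h' : ((n - 2 + 1 : ℕ) : Fin n) = ((n - 2 : ℕ) : Fin n) + 1 := by
          push_cast; ring
        rw [← h', show n - 2 + 1 = n - 1 by omega]
      have hc2 : ((n - 1 : ℕ) : Fin n) + 1 = 0 := by
        have h' : ((n - 1 + 1 : ℕ) : Fin n) = ((n - 1 : ℕ) : Fin n) + 1 := by
          push_cast; ring
        rw [← h', show n - 1 + 1 = n by omega, Fin.natCast_self]
      rw [cyc_conj', hc1, hc2, hi', hc2]
    · rw [if_neg hi, embM_eq]
      rw [show ((i : ℕ) : Fin n) = i from Fin.cast_val_eq_self i,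
        show (((i : ℕ) + 1 : ℕ) : Fin n) = i + 1 from by
          rw [Nat.cast_add, Nat.cast_one, Fin.cast_val_eq_self]]
  refine ⟨?_, ?_, ?_, ?_⟩
  · intro i
    simp only [hs]
    exact braid3 r hyb i (i + 1) (i + 1 + 1) (hne1 i) (hne2 i) (hne1 (i + 1))
  · intro i j h1 h2
    by_cases hij : i = j
    · rw [hij]
    · simp only [hs]
      refine embF_comm r i (i + 1) j (j + 1) hij ?_ ?_ fun h => hij (add_right_cancel h)
      · intro h; apply h1; rw [h]; exact add_sub_cancel_left j 1
      · intro h; apply h2; rw [← h]; exact add_sub_cancel_left i 1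
  · intro i
    simp only [hs]
    exact cyc_conj r i (i + 1)
  · show cycM K B n ^ (2 * n) = 1
    rw [mul_comm 2 n, pow_mul, cyc_pow_n, one_pow]
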